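/- For the inverse multi-quadric kernel k(x,y) = (c² + ‖x − y‖²)^β on ℝᵈ with c > 0 and β ∈ (−1,0), all mixed partial derivatives of the form ∂_{x}^{α} ∂_{y}^{α} k(x,y) (same multi-index α applied to x and y variables) are bounded uniformly over (x,y) ∈ ℝᵈ × ℝᵈ. -/

import Mathlib

open Real

/-- Partial derivative in the `i`-th coordinate of the first (`x`) argument. -/
noncomputable def pderivX {d : ℕ} (i : Fin d)
    (g : (Fin d → ℝ) × (Fin d → ℝ) → ℝ) : (Fin d → ℝ) × (Fin d → ℝ) → ℝ :=
  fun p => deriv (fun t => g (Function.update p.1 i t, p.2)) (p.1 i)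

/-- Partial derivative in the `i`-th coordinate of the second (`y`) argument. -/
noncomputable def pderivY {d : ℕ} (i : Fin d)
    (g : (Fin d → ℝ) × (Fin d → ℝ) → ℝ) : (Fin d → ℝ) × (Fin d → ℝ) → ℝ :=
  fun p => deriv (fun t => g (p.1, Function.update p.2 i t)) (p.2 i)

/-- The mixed derivative operator `∂_x^α ∂_y^α` for a multi-index `α`. -/
noncomputable def mixedDeriv {d : ℕ} (α : Fin d → ℕ)
    (g : (Fin d → ℝ) × (Fin d → ℝ) → ℝ) : (Fin d → ℝ) × (Fin d → ℝ) → ℝ :=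
  (List.finRange d).foldr (fun i h => (pderivX i)^[α i] ((pderivY i)^[α i] h)) g

/-! ### Auxiliary machinery -/

/-- A basic term: `a · ∏ uⱼ^{nⱼ} · (c² + ‖u‖²)^γ`. -/
noncomputable def imqTerm {d : ℕ} (c a : ℝ) (n : Fin d → ℕ) (γ : ℝ) :
    (Fin d → ℝ) → ℝ :=
  fun u => a * (∏ j, u j ^ n j) * (c ^ 2 + ∑ j, u j ^ 2) ^ γ

/-- Finite sums of terms with weight `∑ n + 2γ ≤ 2β` and `γ ≤ β`. -/
inductive Nice {d : ℕ} (c β : ℝ) : ((Fin d → ℝ) → ℝ) → Prop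
  | term (a : ℝ) (n : Fin d → ℕ) (γ : ℝ)
      (h1 : (∑ j, (n j : ℝ)) + 2 * γ ≤ 2 * β) (h2 : γ ≤ β) :
      Nice c β (imqTerm c a n γ)
  | add {F G : (Fin d → ℝ) → ℝ} : Nice c β F → Nice c β G →
      Nice c β (fun u => F u + G u)

lemma prod_update_base {d : ℕ} (u : Fin d → ℝ) (i : Fin d) (s : ℝ) (n : Fin d → ℕ) :
    (∏ j, Function.update u i s j ^ n j)
      = s ^ n i * ∏ j ∈ Finset.univ \ {i}, u j ^ n j := by
  have h : ∀ j ∈ Finset.univ, Function.update u i s j ^ n j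
      = Function.update (fun j => u j ^ n j) i (s ^ n i) j := by
    intro j _
    rcases eq_or_ne j i with rfl | hji
    · simp
    · simp [Function.update_of_ne hji]
  rw [Finset.prod_congr rfl h, Finset.prod_update_of_mem (Finset.mem_univ i)]

lemma sum_update_base {d : ℕ} (u : Fin d → ℝ) (i : Fin d) (s : ℝ) :
    (∑ j, Function.update u i s j ^ 2)
      = s ^ 2 + ∑ j ∈ Finset.univ \ {i}, u j ^ 2 := by
  have h : ∀ j ∈ Finset.univ, Function.update u i s j ^ 2
      = Function.update (fun j => u j ^ 2) i (s ^ 2) j := by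
    intro j _
    rcases eq_or_ne j i with rfl | hji
    · simp
    · simp [Function.update_of_ne hji]
  rw [Finset.sum_congr rfl h, Finset.sum_update_of_mem (Finset.mem_univ i)]

lemma prod_update_index {d : ℕ} (u : Fin d → ℝ) (i : Fin d) (n : Fin d → ℕ) (m : ℕ) :
    (∏ j, u j ^ Function.update n i m j)
      = u i ^ m * ∏ j ∈ Finset.univ \ {i}, u j ^ n j := by
  have h : ∀ j ∈ Finset.univ, u j ^ Function.update n i m j
      = Function.update (fun j => u j ^ n j) i (u i ^ m) j := by
    intro j _
    rcases eq_or_ne j i with rfl | hji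
    · simp
    · simp [Function.update_of_ne hji]
  rw [Finset.prod_congr rfl h, Finset.prod_update_of_mem (Finset.mem_univ i)]

lemma sum_cast_update {d : ℕ} (n : Fin d → ℕ) (i : Fin d) (m : ℕ) :
    (∑ j, ((Function.update n i m j : ℕ) : ℝ))
      = (m : ℝ) + ∑ j ∈ Finset.univ \ {i}, (n j : ℝ) := by
  have h : ∀ j ∈ Finset.univ, ((Function.update n i m j : ℕ) : ℝ)
      = Function.update (fun j => ((n j : ℕ) : ℝ)) i (m : ℝ) j := by
    intro j _
    rcases eq_or_ne j i with rfl | hji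
    · simp
    · simp [Function.update_of_ne hji]
  rw [Finset.sum_congr rfl h, Finset.sum_update_of_mem (Finset.mem_univ i)]

lemma sum_cast_split {d : ℕ} (n : Fin d → ℕ) (i : Fin d) :
    (∑ j, ((n j : ℕ) : ℝ)) = (n i : ℝ) + ∑ j ∈ Finset.univ \ {i}, (n j : ℝ) := by
  have := sum_cast_update n i (n i)
  rwa [Function.update_eq_self] at this

lemma hasDerivAt_imqTerm {d : ℕ} {c : ℝ} (hc : 0 < c) (a : ℝ) (n : Fin d → ℕ) (γ : ℝ)
    (u : Fin d → ℝ) (i : Fin d) :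
    HasDerivAt (fun s => imqTerm c a n γ (Function.update u i s))
      (imqTerm c (a * n i) (Function.update n i (n i - 1)) γ u
        + imqTerm c (2 * a * γ) (Function.update n i (n i + 1)) (γ - 1) u) (u i) := by
  set P := ∏ j ∈ Finset.univ \ {i}, u j ^ n j with hP
  set S := ∑ j ∈ Finset.univ \ {i}, u j ^ 2 with hSdef
  have hS0 : 0 ≤ S := Finset.sum_nonneg fun j _ => sq_nonneg _
  have hpos : (0 : ℝ) < c ^ 2 + ((u i) ^ 2 + S) := by positivity
  have hQ : (∑ j, u j ^ 2) = (u i) ^ 2 + S := by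
    have := sum_update_base u i (u i)
    rwa [Function.update_eq_self] at this
  have hfun : (fun s => imqTerm c a n γ (Function.update u i s))
      = fun s => a * (s ^ n i * P) * (c ^ 2 + (s ^ 2 + S)) ^ γ := by
    funext s
    simp only [imqTerm]
    rw [prod_update_base, sum_update_base]
  rw [hfun]
  have hbase : HasDerivAt (fun s : ℝ => c ^ 2 + (s ^ 2 + S)) (2 * u i) (u i) := by
    simpa using ((hasDerivAt_pow 2 (u i)).add_const S).const_add (c ^ 2)
  have h2 := hbase.rpow_const (p := γ) (Or.inl hpos.ne')
  have h1 : HasDerivAt (fun s : ℝ => a * (s ^ n i * P))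
      (a * (↑(n i) * u i ^ (n i - 1) * P)) (u i) :=
    ((hasDerivAt_pow (n i) (u i)).mul_const P).const_mul a
  have h3 : HasDerivAt (fun s : ℝ => a * (s ^ n i * P) * (c ^ 2 + (s ^ 2 + S)) ^ γ)
      (a * (↑(n i) * u i ^ (n i - 1) * P) * (c ^ 2 + (u i ^ 2 + S)) ^ γ +
        a * (u i ^ n i * P) * (2 * u i * γ * (c ^ 2 + (u i ^ 2 + S)) ^ (γ - 1))) (u i) :=
    h1.mul h2
  convert h3 using 1
  simp only [imqTerm]
  rw [prod_update_index, prod_update_index, hQ, pow_succ]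
  ring

lemma Nice.diff {d : ℕ} {c β : ℝ} {F : (Fin d → ℝ) → ℝ} (hc : 0 < c)
    (h : Nice c β F) (u : Fin d → ℝ) (i : Fin d) :
    DifferentiableAt ℝ (fun s => F (Function.update u i s)) (u i) := by
  induction h with
  | term a n γ h1 h2 => exact (hasDerivAt_imqTerm hc a n γ u i).differentiableAt
  | add hF hG ihF ihG => exact ihF.add ihG

lemma Nice.derivStep {d : ℕ} {c β : ℝ} {F : (Fin d → ℝ) → ℝ} (hc : 0 < c)
    (h : Nice c β F) (i : Fin d) :
    Nice c β (fun u => deriv (fun s => F (Function.update u i s)) (u i)) := by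
  induction h with
  | term a n γ h1 h2 =>
    have he : (fun u => deriv (fun s => imqTerm c a n γ (Function.update u i s)) (u i))
        = fun u => imqTerm c (a * ↑(n i)) (Function.update n i (n i - 1)) γ u
          + imqTerm c (2 * a * γ) (Function.update n i (n i + 1)) (γ - 1) u :=
      funext fun u => (hasDerivAt_imqTerm hc a n γ u i).deriv
    rw [he]
    rw [sum_cast_split n i] at h1
    have hsub : ((n i - 1 : ℕ) : ℝ) ≤ (n i : ℝ) := Nat.cast_le.mpr (Nat.sub_le _ _)
    refine Nice.add (Nice.term _ _ _ ?_ h2) (Nice.term _ _ _ ?_ (by linarith))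
    · rw [sum_cast_update]; linarith
    · rw [sum_cast_update]; push_cast; linarith
  | add hF hG ihF ihG =>
    rename_i F' G'
    have he : (fun u => deriv (fun s => F' (Function.update u i s)
          + G' (Function.update u i s)) (u i))
        = fun u => deriv (fun s => F' (Function.update u i s)) (u i)
          + deriv (fun s => G' (Function.update u i s)) (u i) :=
      funext fun u => deriv_add (hF.diff hc u i) (hG.diff hc u i)
    show Nice c β (fun u => deriv (fun s => F' (Function.update u i s)
        + G' (Function.update u i s)) (u i))
    rw [he]
    exact Nice.add ihF ihG

lemma Nice.neg {d : ℕ} {c β : ℝ} {F : (Fin d → ℝ) → ℝ}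
    (h : Nice c β F) : Nice c β (fun u => -F u) := by
  induction h with
  | term a n γ h1 h2 =>
    have he : (fun u => -imqTerm c a n γ u) = imqTerm c (-a) n γ := by
      funext u; simp only [imqTerm]; ring
    rw [he]
    exact Nice.term _ _ _ h1 h2
  | add hF hG ihF ihG =>
    simp only [neg_add]
    exact Nice.add ihF ihG

lemma Nice.bounded {d : ℕ} {c β : ℝ} {F : (Fin d → ℝ) → ℝ} (hc : 0 < c) (hβ : β ≤ 0)
    (h : Nice c β F) : ∃ C : ℝ, ∀ u, |F u| ≤ C := by
  induction h with
  | term a n γ h1 h2 =>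
    refine ⟨|a| * (c ^ 2) ^ ((∑ j, (n j : ℝ)) / 2 + γ), fun u => ?_⟩
    set Q := c ^ 2 + ∑ j, u j ^ 2 with hQdef
    have hQpos : 0 < Q := by positivity
    have hcQ : c ^ 2 ≤ Q := le_add_of_nonneg_right (Finset.sum_nonneg fun j _ => sq_nonneg _)
    have habs : |imqTerm c a n γ u| = |a| * (∏ j, |u j| ^ n j) * Q ^ γ := by
      rw [imqTerm, abs_mul, abs_mul, Finset.abs_prod,
        abs_of_pos (Real.rpow_pos_of_pos hQpos γ)]
      simp_rw [abs_pow]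
    have hb : ∀ j, |u j| ≤ Real.sqrt Q := by
      intro j
      have hle : u j ^ 2 ≤ Q := by
        have hsum : u j ^ 2 ≤ ∑ k, u k ^ 2 := by
          simpa using Finset.single_le_sum (f := fun k => u k ^ 2)
            (fun k _ => sq_nonneg _) (Finset.mem_univ j)
        simp only [hQdef]
        nlinarith [sq_nonneg c]
      calc |u j| = Real.sqrt ((u j) ^ 2) := (Real.sqrt_sq_eq_abs _).symm
        _ ≤ Real.sqrt Q := Real.sqrt_le_sqrt hle
    have hprod : (∏ j, |u j| ^ n j) ≤ Q ^ ((∑ j, (n j : ℝ)) / 2) := by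
      calc (∏ j, |u j| ^ n j) ≤ ∏ j, Real.sqrt Q ^ n j :=
            Finset.prod_le_prod (fun j _ => pow_nonneg (abs_nonneg _) _)
              (fun j _ => pow_le_pow_left₀ (abs_nonneg _) (hb j) _)
        _ = Real.sqrt Q ^ (∑ j, n j) := by rw [Finset.prod_pow_eq_pow_sum]
        _ = Q ^ ((∑ j, (n j : ℝ)) / 2) := by
            rw [Real.sqrt_eq_rpow, ← Real.rpow_natCast (Q ^ ((1:ℝ)/2)) (∑ j, n j),
              ← Real.rpow_mul hQpos.le]
            congr 1
            push_cast
            ring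
    have he0 : (∑ j, (n j : ℝ)) / 2 + γ ≤ 0 := by linarith
    calc |imqTerm c a n γ u| = |a| * (∏ j, |u j| ^ n j) * Q ^ γ := habs
      _ ≤ |a| * Q ^ ((∑ j, (n j : ℝ)) / 2) * Q ^ γ := by
          have := Real.rpow_nonneg hQpos.le γ
          gcongr
      _ = |a| * Q ^ ((∑ j, (n j : ℝ)) / 2 + γ) := by
          rw [mul_assoc, ← Real.rpow_add hQpos]
      _ ≤ |a| * (c ^ 2) ^ ((∑ j, (n j : ℝ)) / 2 + γ) :=
          mul_le_mul_of_nonneg_left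
            (Real.rpow_le_rpow_of_nonpos (by positivity) hcQ he0) (abs_nonneg a)
  | add hF hG ihF ihG =>
    obtain ⟨C1, h1⟩ := ihF
    obtain ⟨C2, h2⟩ := ihG
    exact ⟨C1 + C2, fun u => (abs_add_le _ _).trans (add_le_add (h1 u) (h2 u))⟩

/-- Functions of `(x, y)` representable as a nice function of `x - y`. -/
def IMQRep {d : ℕ} (c β : ℝ) (g : (Fin d → ℝ) × (Fin d → ℝ) → ℝ) : Prop :=
  ∃ F : (Fin d → ℝ) → ℝ, Nice c β F ∧ g = fun p => F (p.1 - p.2)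

lemma imqrep_pderivX {d : ℕ} {c β : ℝ} (hc : 0 < c) (i : Fin d)
    {g : (Fin d → ℝ) × (Fin d → ℝ) → ℝ} (hg : IMQRep c β g) : IMQRep c β (pderivX i g) := by
  obtain ⟨F, hF, rfl⟩ := hg
  refine ⟨fun u => deriv (fun s => F (Function.update u i s)) (u i),
    hF.derivStep hc i, ?_⟩
  funext p
  show deriv (fun t => F (Function.update p.1 i t - p.2)) (p.1 i) = _
  have key : ∀ t : ℝ, Function.update p.1 i t - p.2
      = Function.update (p.1 - p.2) i (t - p.2 i) := by
    intro t; funext j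
    rcases eq_or_ne j i with rfl | hji
    · simp
    · simp [Function.update_of_ne hji]
  simp_rw [key]
  exact deriv_comp_sub_const (f := fun s => F (Function.update (p.1 - p.2) i s))
    (a := p.2 i) (x := p.1 i)

lemma imqrep_pderivY {d : ℕ} {c β : ℝ} (hc : 0 < c) (i : Fin d)
    {g : (Fin d → ℝ) × (Fin d → ℝ) → ℝ} (hg : IMQRep c β g) : IMQRep c β (pderivY i g) := by
  obtain ⟨F, hF, rfl⟩ := hg
  refine ⟨fun u => -deriv (fun s => F (Function.update u i s)) (u i),
    (hF.derivStep hc i).neg, ?_⟩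
  funext p
  show deriv (fun t => F (p.1 - Function.update p.2 i t)) (p.2 i) = _
  have key : ∀ t : ℝ, p.1 - Function.update p.2 i t
      = Function.update (p.1 - p.2) i (p.1 i - t) := by
    intro t; funext j
    rcases eq_or_ne j i with rfl | hji
    · simp
    · simp [Function.update_of_ne hji]
  simp_rw [key]
  exact deriv_comp_const_sub (f := fun s => F (Function.update (p.1 - p.2) i s))
    (a := p.1 i) (x := p.2 i)

lemma imqrep_iter {d : ℕ} {c β : ℝ}
    (f : ((Fin d → ℝ) × (Fin d → ℝ) → ℝ) → (Fin d → ℝ) × (Fin d → ℝ) → ℝ)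
    (hf : ∀ g, IMQRep c β g → IMQRep c β (f g)) :
    ∀ (m : ℕ) (g), IMQRep c β g → IMQRep c β (f^[m] g) := by
  intro m
  induction m with
  | zero => intro g hg; simpa using hg
  | succ m ih =>
    intro g hg
    rw [Function.iterate_succ_apply]
    exact ih _ (hf _ hg)

/-- all mixed partial derivatives `∂_x^α ∂_y^α` of the inverse
multi-quadric kernel are uniformly bounded. -/
theorem imq_mixed_derivatives_bounded
    {d : ℕ} (c β : ℝ) (hc : 0 < c) (hβ₁ : -1 < β) (hβ₂ : β < 0)
    (α : Fin d → ℕ) :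
    ∃ C : ℝ, ∀ p : (Fin d → ℝ) × (Fin d → ℝ),
      |mixedDeriv α (fun q => (c ^ 2 + ∑ i, (q.1 i - q.2 i) ^ 2) ^ β) p| ≤ C := by
  have hk : IMQRep c β (fun q : (Fin d → ℝ) × (Fin d → ℝ) =>
      (c ^ 2 + ∑ i, (q.1 i - q.2 i) ^ 2) ^ β) := by
    refine ⟨imqTerm c 1 (fun _ => 0) β, Nice.term _ _ _ (by simp) le_rfl, ?_⟩
    funext p
    simp [imqTerm, Pi.sub_apply]
  have hrep : IMQRep c β (mixedDeriv α (fun q : (Fin d → ℝ) × (Fin d → ℝ) =>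
      (c ^ 2 + ∑ i, (q.1 i - q.2 i) ^ 2) ^ β)) := by
    rw [mixedDeriv]
    generalize (fun q : (Fin d → ℝ) × (Fin d → ℝ) =>
      (c ^ 2 + ∑ i, (q.1 i - q.2 i) ^ 2) ^ β) = g at hk ⊢
    induction (List.finRange d) with
    | nil => simpa using hk
    | cons i l ih =>
      simp only [List.foldr_cons]
      exact imqrep_iter _ (fun g hg => imqrep_pderivX hc i hg) _ _
        (imqrep_iter _ (fun g hg => imqrep_pderivY hc i hg) _ _ ih)
  obtain ⟨F, hF, hFe⟩ := hrep
  obtain ⟨C, hC⟩ := hF.bounded hc hβ₂.le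
  exact ⟨C, fun p => by rw [hFe]; exact hC _⟩
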